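/- arXiv:1301.4793 — 5 statements merged into one kernel-verified Lean document; each statement's English description precedes it below -/
import Mathlib

section
/- Let A be a real n×n matrix that is diagonalizable over ℂ as A = Q Λ Q⁻¹ with Q an invertible complex n×n matrix and Λ = diag(λ₁,…,λₙ), let b ∈ ℝⁿ, and assume λ_k + conj(λ_ℓ) ≠ 0 for all 1 ≤ k, ℓ ≤ n. Then for every t ≥ 0, ∫₀ᵗ e^{Aτ} b bᵀ e^{Aᵀτ} dτ = Q Θf(t) Qᴴ, where Θf(t) is the complex n×n matrix with entries Θf(t)_{k,ℓ} = (Q⁻¹b)_k · conj((Q⁻¹b)_ℓ) / (λ_k + conj(λ_ℓ)) · (e^{(λ_k + conj(λ_ℓ)) t} − 1). -/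
open Matrix MeasureTheory

open NormedSpace in
lemma aux_map_exp {n : ℕ} (M : Matrix (Fin n) (Fin n) ℝ) :
    (exp M).map Complex.ofReal = exp (M.map Complex.ofReal) := by
  letI : SeminormedRing (Matrix (Fin n) (Fin n) ℝ) := Matrix.linftyOpSemiNormedRing
  letI : NormedRing (Matrix (Fin n) (Fin n) ℝ) := Matrix.linftyOpNormedRing
  letI : NormedAlgebra ℝ (Matrix (Fin n) (Fin n) ℝ) := Matrix.linftyOpNormedAlgebra
  letI : SeminormedRing (Matrix (Fin n) (Fin n) ℂ) := Matrix.linftyOpSemiNormedRing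
  letI : NormedRing (Matrix (Fin n) (Fin n) ℂ) := Matrix.linftyOpNormedRing
  letI : NormedAlgebra ℝ (Matrix (Fin n) (Fin n) ℂ) := Matrix.linftyOpNormedAlgebra
  letI : NormedAlgebra ℚ (Matrix (Fin n) (Fin n) ℝ) := Matrix.linftyOpNormedAlgebra
  letI : NormedAlgebra ℚ (Matrix (Fin n) (Fin n) ℂ) := Matrix.linftyOpNormedAlgebra
  exact map_exp (Complex.ofRealHom.mapMatrix :
      Matrix (Fin n) (Fin n) ℝ →+* Matrix (Fin n) (Fin n) ℂ)
    (continuous_matrix fun i j =>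
      Complex.continuous_ofReal.comp ((continuous_apply j).comp (continuous_apply i))) M

open NormedSpace in
lemma aux_expA {n : ℕ} (A : Matrix (Fin n) (Fin n) ℝ) (Q : Matrix (Fin n) (Fin n) ℂ)
    (lam : Fin n → ℂ) (hQ : IsUnit Q.det)
    (hA : A.map (Complex.ofReal) = Q * Matrix.diagonal lam * Q⁻¹) (τ : ℝ) :
    (exp (τ • A)).map Complex.ofReal
      = Q * Matrix.diagonal (fun k => Complex.exp (lam k * τ)) * Q⁻¹ := by
  have hQu : IsUnit Q := (Matrix.isUnit_iff_isUnit_det Q).mpr hQ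
  set u : (Matrix (Fin n) (Fin n) ℂ)ˣ := hQu.unit with hu
  have huc : (u : Matrix (Fin n) (Fin n) ℂ) = Q := rfl
  have huc' : ((u⁻¹ : (Matrix (Fin n) (Fin n) ℂ)ˣ) : Matrix (Fin n) (Fin n) ℂ) = Q⁻¹ := by
    rw [Matrix.coe_units_inv, huc]
  have hmap : (τ • A).map Complex.ofReal
      = Q * Matrix.diagonal (fun k => (τ : ℂ) * lam k) * Q⁻¹ := by
    have h1 : (τ • A).map Complex.ofReal = (τ : ℂ) • (A.map Complex.ofReal) := by
      ext i j; simp [Matrix.map_apply]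
    rw [h1, hA, ← smul_mul_assoc, ← mul_smul_comm, ← Matrix.diagonal_smul]
    rfl
                      
  rw [aux_map_exp, hmap, ← huc', ← huc, Matrix.exp_units_conj, huc, huc',
    Matrix.exp_diagonal]
  have : (exp fun k => (τ : ℂ) * lam k) = fun k => Complex.exp (lam k * τ) := by
    funext k
    rw [Pi.coe_exp, ← Complex.exp_eq_exp_ℂ, mul_comm]
  rw [this]

open NormedSpace in
lemma aux_integrand {n : ℕ} (A : Matrix (Fin n) (Fin n) ℝ) (Q : Matrix (Fin n) (Fin n) ℂ)
    (lam : Fin n → ℂ) (b : Fin n → ℝ) (hQ : IsUnit Q.det)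
    (hA : A.map (Complex.ofReal) = Q * Matrix.diagonal lam * Q⁻¹) (τ : ℝ) :
    (exp (τ • A) * Matrix.vecMulVec b b * exp (τ • Aᵀ)).map Complex.ofReal
      = Q * (Matrix.of fun i j : Fin n =>
          Complex.exp ((lam i + starRingEnd ℂ (lam j)) * τ) *
            ((Q⁻¹ *ᵥ fun i => ((b i : ℂ))) i *
              starRingEnd ℂ ((Q⁻¹ *ᵥ fun i => ((b i : ℂ))) j))) * Qᴴ := by
  have mapmul : ∀ (X Y : Matrix (Fin n) (Fin n) ℝ),
      (X * Y).map Complex.ofReal = X.map Complex.ofReal * Y.map Complex.ofReal :=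
    fun X Y => Matrix.map_mul (f := Complex.ofRealHom)
  set c : Fin n → ℂ := Q⁻¹ *ᵥ fun i => ((b i : ℂ)) with hc
  set D : Matrix (Fin n) (Fin n) ℂ :=
    Matrix.diagonal (fun k => Complex.exp (lam k * τ)) with hD
  have h1 : (exp (τ • A)).map Complex.ofReal = Q * D * Q⁻¹ := aux_expA A Q lam hQ hA τ
  have hreal : ∀ (M : Matrix (Fin n) (Fin n) ℝ),
      (M.map Complex.ofReal)ᵀ = (M.map Complex.ofReal)ᴴ := by
    intro M
    ext i j
    simp [Matrix.conjTranspose_apply, Matrix.map_apply, Complex.conj_ofReal]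
  have h2 : (exp (τ • Aᵀ)).map Complex.ofReal = (Q⁻¹)ᴴ * (Dᴴ * Qᴴ) := by
    have ht : τ • Aᵀ = (τ • A)ᵀ := (Matrix.transpose_smul τ A).symm
    rw [ht, Matrix.exp_transpose, Matrix.transpose_map, hreal, h1,
      Matrix.conjTranspose_mul, Matrix.conjTranspose_mul]
  have hmid : Q⁻¹ * ((Matrix.vecMulVec b b).map Complex.ofReal) * (Q⁻¹)ᴴ
      = Matrix.vecMulVec c (star c) := by
    ext i j
    simp only [Matrix.mul_apply, Matrix.vecMulVec_apply, Matrix.map_apply,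
      Matrix.conjTranspose_apply, Pi.star_apply, hc, Matrix.mulVec, dotProduct,
      Complex.ofReal_mul, star_sum, star_mul', Complex.star_def, Complex.conj_ofReal]
    rw [Finset.sum_mul_sum]
    rw [Finset.sum_comm]
    refine Finset.sum_congr rfl fun x _ => ?_
    rw [Finset.sum_mul]
    refine Finset.sum_congr rfl fun y _ => ?_
    ring
  have hDV : D * Matrix.vecMulVec c (star c) * Dᴴ
      = Matrix.of (fun i j : Fin n =>
          Complex.exp ((lam i + starRingEnd ℂ (lam j)) * τ) *
            (c i * starRingEnd ℂ (c j))) := by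
    ext i j
    simp only [hD, Matrix.diagonal_conjTranspose, Matrix.diagonal_mul, Matrix.mul_diagonal,
      Matrix.vecMulVec_apply, Pi.star_apply, Matrix.of_apply, Complex.star_def,
      ← Complex.exp_conj, add_mul, Complex.exp_add]
    rw [_root_.map_mul, Complex.conj_ofReal]
    ring
  rw [mapmul, mapmul, h1, h2]
  calc Q * D * Q⁻¹ * ((Matrix.vecMulVec b b).map Complex.ofReal) * ((Q⁻¹)ᴴ * (Dᴴ * Qᴴ))
      = Q * (D * (Q⁻¹ * ((Matrix.vecMulVec b b).map Complex.ofReal) * (Q⁻¹)ᴴ) * Dᴴ * Qᴴ) := by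
        simp only [Matrix.mul_assoc]
    _ = Q * (D * Matrix.vecMulVec c (star c) * Dᴴ * Qᴴ) := by rw [hmid]
    _ = Q * (Matrix.of (fun i j : Fin n =>
          Complex.exp ((lam i + starRingEnd ℂ (lam j)) * τ) *
            (c i * starRingEnd ℂ (c j))) * Qᴴ) := by rw [hDV]
    _ = _ := by rw [← Matrix.mul_assoc]

/-- closed form of the forward Gramian integral
`∫₀ᵗ e^{Aτ} b bᵀ e^{Aᵀτ} dτ = Q Θf(t) Qᴴ` for a diagonalizable `A = Q Λ Q⁻¹`. -/
theorem forward_gramian_closed_form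
    {n : ℕ} (A : Matrix (Fin n) (Fin n) ℝ) (Q : Matrix (Fin n) (Fin n) ℂ)
    (lam : Fin n → ℂ) (b : Fin n → ℝ)
    (hQ : IsUnit Q.det)
    (hA : A.map (Complex.ofReal) = Q * Matrix.diagonal lam * Q⁻¹)
    (hlam : ∀ k l : Fin n, lam k + starRingEnd ℂ (lam l) ≠ 0)
    (t : ℝ) (ht : 0 ≤ t) :
    (Matrix.of fun k l : Fin n =>
        ∫ τ in (0:ℝ)..t,
          (NormedSpace.exp (τ • A) * Matrix.vecMulVec b b *
            NormedSpace.exp (τ • Aᵀ)) k l).map (Complex.ofReal)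
      = Q * (Matrix.of fun k l : Fin n =>
            (Q⁻¹ *ᵥ fun i => ((b i : ℂ))) k *
              starRingEnd ℂ ((Q⁻¹ *ᵥ fun i => ((b i : ℂ))) l) /
                (lam k + starRingEnd ℂ (lam l)) *
              (Complex.exp ((lam k + starRingEnd ℂ (lam l)) * t) - 1)) * Qᴴ := by
  set c : Fin n → ℂ := Q⁻¹ *ᵥ fun i => ((b i : ℂ)) with hc
  ext k l
  rw [Matrix.map_apply, Matrix.of_apply, ← intervalIntegral.integral_ofReal]
  have h3 : ∀ τ : ℝ,
      (((NormedSpace.exp (τ • A) * Matrix.vecMulVec b b *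
          NormedSpace.exp (τ • Aᵀ)) k l : ℝ) : ℂ)
        = ∑ j : Fin n, ∑ i : Fin n,
            (Q k i * (c i * starRingEnd ℂ (c j)) * starRingEnd ℂ (Q l j)) *
              Complex.exp ((lam i + starRingEnd ℂ (lam j)) * τ) := by
    intro τ
    simp only [hc]
    have h := congrFun (congrFun (aux_integrand A Q lam b hQ hA τ) k) l
    rw [Matrix.map_apply] at h
    rw [h]
    simp only [Matrix.mul_apply, Matrix.conjTranspose_apply, Matrix.of_apply, Finset.sum_mul, Complex.star_def]
    refine Finset.sum_congr rfl fun j _ => Finset.sum_congr rfl fun i _ => by ring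
  rw [intervalIntegral.integral_congr (g := fun τ => ∑ j : Fin n, ∑ i : Fin n,
      (Q k i * (c i * starRingEnd ℂ (c j)) * starRingEnd ℂ (Q l j)) *
        Complex.exp ((lam i + starRingEnd ℂ (lam j)) * τ)) (fun τ _ => h3 τ)]
  simp only [← Finset.sum_product']
  rw [intervalIntegral.integral_finset_sum (fun p _ => by
    apply Continuous.intervalIntegrable
    exact continuous_const.mul (Complex.continuous_exp.comp
      (continuous_const.mul Complex.continuous_ofReal)))]
  rw [Matrix.mul_apply]
  simp only [Matrix.mul_apply, Matrix.conjTranspose_apply, Matrix.of_apply, Finset.sum_mul,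
    Complex.star_def]
  rw [← Finset.sum_product']
  refine Finset.sum_congr rfl fun p _ => ?_
  rw [intervalIntegral.integral_const_mul, integral_exp_mul_complex (hlam p.2 p.1)]
  simp only [Complex.ofReal_zero, mul_zero, Complex.exp_zero]
  ring
end

section
/- Let A be a real n×n matrix that is diagonalizable over ℂ as A = Q Λ Q⁻¹ with Q an invertible complex n×n matrix and Λ = diag(λ₁,…,λₙ), let b ∈ ℝⁿ, and assume λ_k + conj(λ_ℓ) ≠ 0 for all 1 ≤ k, ℓ ≤ n. Then for every t ≥ 0, ∫₀ᵗ e^{−Aτ} b bᵀ e^{−Aᵀτ} dτ = Q Θb(t) Qᴴ, where Θb(t) is the complex n×n matrix with entries Θb(t)_{k,ℓ} = (Q⁻¹b)_k · conj((Q⁻¹b)_ℓ) / (λ_k + conj(λ_ℓ)) · (1 − e^{−(λ_k + conj(λ_ℓ)) t}). -/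
open Matrix MeasureTheory

private lemma matexp_ofReal {m : Type*} [Fintype m] [DecidableEq m] (M : Matrix m m ℝ) :
    (NormedSpace.exp M).map Complex.ofReal = NormedSpace.exp (M.map Complex.ofReal) := by
  letI : SeminormedRing (Matrix m m ℝ) := Matrix.linftyOpSemiNormedRing
  letI : NormedRing (Matrix m m ℝ) := Matrix.linftyOpNormedRing
  letI : NormedAlgebra ℝ (Matrix m m ℝ) := Matrix.linftyOpNormedAlgebra
  letI : SeminormedRing (Matrix m m ℂ) := Matrix.linftyOpSemiNormedRing
  letI : NormedRing (Matrix m m ℂ) := Matrix.linftyOpNormedRing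
  letI : NormedAlgebra ℝ (Matrix m m ℂ) := Matrix.linftyOpNormedAlgebra
  letI : NormedAlgebra ℚ (Matrix m m ℝ) := Matrix.linftyOpNormedAlgebra
  letI : NormedAlgebra ℚ (Matrix m m ℂ) := Matrix.linftyOpNormedAlgebra
  exact NormedSpace.map_exp (Complex.ofRealHom.mapMatrix)
    (Continuous.matrix_map continuous_id Complex.continuous_ofReal) M

private lemma mapR_mul {m : Type*} [Fintype m] (X Y : Matrix m m ℝ) :
    (X * Y).map Complex.ofReal = X.map Complex.ofReal * Y.map Complex.ofReal := by
  ext i j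
  simp [Matrix.map_apply, Matrix.mul_apply]

/-- closed form of the backward Gramian integral
`∫₀ᵗ e^{−Aτ} b bᵀ e^{−Aᵀτ} dτ = Q Θb(t) Qᴴ` for a diagonalizable `A = Q Λ Q⁻¹`. -/
theorem backward_gramian_closed_form
    {n : ℕ} (A : Matrix (Fin n) (Fin n) ℝ) (Q : Matrix (Fin n) (Fin n) ℂ)
    (lam : Fin n → ℂ) (b : Fin n → ℝ)
    (hQ : IsUnit Q.det)
    (hA : A.map (Complex.ofReal) = Q * Matrix.diagonal lam * Q⁻¹)
    (hlam : ∀ k l : Fin n, lam k + starRingEnd ℂ (lam l) ≠ 0)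
    (t : ℝ) (ht : 0 ≤ t) :
    (Matrix.of fun k l : Fin n =>
        ∫ τ in (0:ℝ)..t,
          (NormedSpace.exp ((-τ) • A) * Matrix.vecMulVec b b *
            NormedSpace.exp ((-τ) • Aᵀ)) k l).map (Complex.ofReal)
      = Q * (Matrix.of fun k l : Fin n =>
            (Q⁻¹ *ᵥ fun i => ((b i : ℂ))) k *
              starRingEnd ℂ ((Q⁻¹ *ᵥ fun i => ((b i : ℂ))) l) /
                (lam k + starRingEnd ℂ (lam l)) *
              (1 - Complex.exp (-((lam k + starRingEnd ℂ (lam l)) * t)))) * Qᴴ := by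
  classical
  set bc : Fin n → ℂ := fun i => ((b i : ℂ)) with hbc
  set c : Fin n → ℂ := Q⁻¹ *ᵥ bc with hc
  have hQu : IsUnit Q := (Matrix.isUnit_iff_isUnit_det Q).mpr hQ
  set N : ℝ → Matrix (Fin n) (Fin n) ℂ := fun τ =>
    Matrix.of fun k l => c k * starRingEnd ℂ (c l) *
      Complex.exp (-((lam k + starRingEnd ℂ (lam l)) * τ)) with hN
  have key : ∀ τ : ℝ,
      ((NormedSpace.exp ((-τ) • A) * Matrix.vecMulVec b b *
        NormedSpace.exp ((-τ) • Aᵀ)).map Complex.ofReal) = Q * N τ * Qᴴ := by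
    intro τ
    -- exponential of the complexified matrix
    have h1 : (NormedSpace.exp ((-τ) • A)).map Complex.ofReal
        = Q * Matrix.diagonal (fun k => Complex.exp ((-τ : ℂ) * lam k)) * Q⁻¹ := by
      rw [matexp_ofReal]
      have hs : ((-τ) • A).map Complex.ofReal = (-τ : ℂ) • (A.map Complex.ofReal) := by
        ext i j; simp [Matrix.map_apply]
      rw [hs, hA, ← smul_mul_assoc, ← mul_smul_comm, ← Matrix.diagonal_smul,
        Matrix.exp_conj Q _ hQu, Matrix.exp_diagonal]
      have hdiag : NormedSpace.exp ((-(τ:ℂ)) • lam) = fun k => Complex.exp ((-τ : ℂ) * lam k) := by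
        funext k
        rw [Pi.coe_exp]
        simp [← Complex.exp_eq_exp_ℂ, smul_eq_mul]
      rw [hdiag]
    have h2 : (NormedSpace.exp ((-τ) • Aᵀ)).map Complex.ofReal
        = (Qᴴ)⁻¹ * Matrix.diagonal
            (fun l => Complex.exp ((-τ : ℂ) * starRingEnd ℂ (lam l))) * Qᴴ := by
      have hT : (-τ) • Aᵀ = ((-τ) • A)ᵀ := (Matrix.transpose_smul _ _).symm
      have hreal : ∀ M : Matrix (Fin n) (Fin n) ℝ,
          (Mᵀ).map Complex.ofReal = (M.map Complex.ofReal)ᴴ := by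
        intro M; ext i j
        simp [Matrix.map_apply, Matrix.conjTranspose_apply, Complex.conj_ofReal]
      rw [hT, Matrix.exp_transpose, hreal, h1]
      rw [Matrix.conjTranspose_mul, Matrix.conjTranspose_mul,
        Matrix.conjTranspose_nonsing_inv, Matrix.diagonal_conjTranspose]
      have : star (fun k => Complex.exp ((-τ : ℂ) * lam k))
          = fun l => Complex.exp ((-τ : ℂ) * starRingEnd ℂ (lam l)) := by
        funext l
        simp [Pi.star_apply, ← Complex.exp_conj, _root_.map_mul, Complex.conj_ofReal]
      rw [this, Matrix.mul_assoc]
    have h3 : (Matrix.vecMulVec b b).map Complex.ofReal = Matrix.vecMulVec bc bc := by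
      ext i j; simp [Matrix.map_apply, Matrix.vecMulVec_apply, hbc]
    have hV1 : Q⁻¹ * Matrix.vecMulVec bc bc = Matrix.vecMulVec c bc := by
      ext i j
      simp only [Matrix.mul_apply, Matrix.vecMulVec_apply, hc, Matrix.mulVec, dotProduct,
        Finset.sum_mul]
      exact Finset.sum_congr rfl fun k _ => by ring
    have hV2 : Matrix.vecMulVec c bc * (Qᴴ)⁻¹
        = Matrix.vecMulVec c (fun j => starRingEnd ℂ (c j)) := by
      have hinv : (Qᴴ)⁻¹ = (Q⁻¹)ᴴ := (Matrix.conjTranspose_nonsing_inv Q).symm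
      ext i j
      simp only [hinv, Matrix.mul_apply, Matrix.vecMulVec_apply, Matrix.conjTranspose_apply,
        hc, Matrix.mulVec, dotProduct, map_sum, Finset.mul_sum]
      exact Finset.sum_congr rfl fun k _ => by
        simp [hbc, Complex.conj_ofReal]; ring
    rw [mapR_mul, mapR_mul, h1, h2, h3]
    calc Q * Matrix.diagonal (fun k => Complex.exp ((-τ : ℂ) * lam k)) * Q⁻¹ *
          Matrix.vecMulVec bc bc *
          ((Qᴴ)⁻¹ * Matrix.diagonal
              (fun l => Complex.exp ((-τ : ℂ) * starRingEnd ℂ (lam l))) * Qᴴ)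
        = Q * (Matrix.diagonal (fun k => Complex.exp ((-τ : ℂ) * lam k)) *
            ((Q⁻¹ * Matrix.vecMulVec bc bc) * (Qᴴ)⁻¹) *
            Matrix.diagonal (fun l => Complex.exp ((-τ : ℂ) * starRingEnd ℂ (lam l)))) * Qᴴ := by
          simp only [Matrix.mul_assoc]
      _ = Q * N τ * Qᴴ := by
          rw [hV1, hV2]
          congr 1
          congr 1
          ext k l
          simp only [Matrix.diagonal_mul, Matrix.mul_diagonal, Matrix.vecMulVec_apply, hN,
            Matrix.of_apply]
          have hexp : Complex.exp ((-τ : ℂ) * lam k) *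
              Complex.exp ((-τ : ℂ) * starRingEnd ℂ (lam l))
              = Complex.exp (-((lam k + starRingEnd ℂ (lam l)) * τ)) := by
            rw [← Complex.exp_add]; congr 1; ring
          rw [← hexp]; ring
  ext k l
  rw [Matrix.map_apply, Matrix.of_apply, ← intervalIntegral.integral_ofReal]
  have hentry : ∀ τ : ℝ,
      (((NormedSpace.exp ((-τ) • A) * Matrix.vecMulVec b b *
        NormedSpace.exp ((-τ) • Aᵀ)) k l : ℝ) : ℂ)
      = ∑ j, ∑ i, Q k i * N τ i j * Qᴴ j l := by
    intro τ
    have := congrFun (congrFun (key τ) k) l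
    rw [Matrix.map_apply] at this
    rw [this, Matrix.mul_apply]
    simp_rw [Matrix.mul_apply, Finset.sum_mul]
  rw [intervalIntegral.integral_congr (g := fun τ => ∑ j, ∑ i, Q k i * N τ i j * Qᴴ j l)
    (fun τ _ => hentry τ)]
  have hcont : ∀ i j : Fin n, Continuous fun τ : ℝ => Q k i * N τ i j * Qᴴ j l := by
    intro i j
    simp only [hN, Matrix.of_apply]
    fun_prop
  rw [intervalIntegral.integral_finset_sum (fun j _ =>
    ((continuous_finset_sum _ fun i _ => hcont i j).intervalIntegrable 0 t))]
  simp_rw [intervalIntegral.integral_finset_sum (fun i _ => ((hcont _ _).intervalIntegrable 0 t))]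
  rw [Matrix.mul_apply]
  simp_rw [Matrix.mul_apply, Finset.sum_mul]
  apply Finset.sum_congr rfl
  intro j _
  apply Finset.sum_congr rfl
  intro i _
  have hrw : ∀ τ : ℝ, Q k i * N τ i j * Qᴴ j l
      = (Q k i * (c i * starRingEnd ℂ (c j)) * Qᴴ j l) *
          Complex.exp ((-(lam i + starRingEnd ℂ (lam j))) * τ) := by
    intro τ
    simp only [hN, Matrix.of_apply, neg_mul]
    ring_nf
  simp_rw [hrw]
  rw [intervalIntegral.integral_const_mul,
    integral_exp_mul_complex (neg_ne_zero.mpr (hlam i j))]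
  simp only [Matrix.of_apply, Complex.ofReal_zero, mul_zero, Complex.exp_zero, neg_mul]
  rw [div_neg, ← neg_div, neg_sub]
  ring
end

section
/- Let A be a real n×n matrix that is diagonalizable over ℂ as A = Q Λ Q⁻¹ with Q an invertible complex n×n matrix and Λ = diag(λ₁,…,λₙ), let B be a real n×m matrix, set Ψ := Q⁻¹B (Q⁻¹B)ᴴ, and assume λ_k + conj(λ_ℓ) ≠ 0 for all 1 ≤ k, ℓ ≤ n. Then for every t ≥ 0, ∫₀ᵗ e^{Aτ} B Bᵀ e^{Aᵀτ} dτ = Q Θf(t) Qᴴ, where Θf(t) is the complex n×n matrix with entries Θf(t)_{k,ℓ} = ψ_{k,ℓ} / (λ_k + conj(λ_ℓ)) · (e^{(λ_k + conj(λ_ℓ)) t} − 1) and ψ_{k,ℓ} denotes the (k,ℓ) entry of Ψ. -/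
open Matrix MeasureTheory

/-- closed form of the forward Gramian integral with a matrix input
`∫₀ᵗ e^{Aτ} B Bᵀ e^{Aᵀτ} dτ = Q Θf(t) Qᴴ` where `Θf(t)ₖₗ = ψₖₗ/(λₖ+conj λₗ)·(e^{(λₖ+conj λₗ)t}−1)`
and `Ψ = Q⁻¹B (Q⁻¹B)ᴴ`. -/
theorem forward_gramian_closed_form_matrix_input
    {n m : ℕ} (A : Matrix (Fin n) (Fin n) ℝ) (Q : Matrix (Fin n) (Fin n) ℂ)
    (lam : Fin n → ℂ) (B : Matrix (Fin n) (Fin m) ℝ)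
    (hQ : IsUnit Q.det)
    (hA : A.map (Complex.ofReal) = Q * Matrix.diagonal lam * Q⁻¹)
    (hlam : ∀ k l : Fin n, lam k + starRingEnd ℂ (lam l) ≠ 0)
    (Ψ : Matrix (Fin n) (Fin n) ℂ)
    (hΨ : Ψ = (Q⁻¹ * B.map (Complex.ofReal)) * (Q⁻¹ * B.map (Complex.ofReal))ᴴ)
    (t : ℝ) (ht : 0 ≤ t) :
    (Matrix.of fun k l : Fin n =>
        ∫ τ in (0:ℝ)..t,
          (NormedSpace.exp (τ • A) * (B * Bᵀ) *
            NormedSpace.exp (τ • Aᵀ)) k l).map (Complex.ofReal)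
      = Q * (Matrix.of fun k l : Fin n =>
            Ψ k l / (lam k + starRingEnd ℂ (lam l)) *
              (Complex.exp ((lam k + starRingEnd ℂ (lam l)) * t) - 1)) * Qᴴ := by
  classical
  have hQu : IsUnit Q := (Matrix.isUnit_iff_isUnit_det _).mpr hQ
  -- the pointwise identity for the integrand
  have map_mul' : ∀ {p q r : ℕ} (X : Matrix (Fin p) (Fin q) ℝ) (Y : Matrix (Fin q) (Fin r) ℝ),
      (X * Y).map Complex.ofReal = X.map Complex.ofReal * Y.map Complex.ofReal := by
    intro p q r X Y
    ext i j
    simp only [Matrix.map_apply, Matrix.mul_apply]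
    push_cast
    rfl
  have key : ∀ τ : ℝ,
      (NormedSpace.exp (τ • A) * (B * Bᵀ) * NormedSpace.exp (τ • Aᵀ)).map Complex.ofReal
        = Q * (Matrix.of fun k l : Fin n =>
            Ψ k l * Complex.exp ((lam k + starRingEnd ℂ (lam l)) * τ)) * Qᴴ := by
    intro τ
    -- real-matrix rearrangement
    have hexpT : NormedSpace.exp (τ • Aᵀ) = (NormedSpace.exp (τ • A))ᵀ := by
      rw [← Matrix.transpose_smul, Matrix.exp_transpose]
    set N : Matrix (Fin n) (Fin m) ℝ := NormedSpace.exp (τ • A) * B with hN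
    have hre : NormedSpace.exp (τ • A) * (B * Bᵀ) * NormedSpace.exp (τ • Aᵀ) = N * Nᵀ := by
      rw [hexpT, hN, Matrix.transpose_mul]
      simp only [Matrix.mul_assoc]
    set M : Matrix (Fin n) (Fin m) ℂ := N.map Complex.ofReal with hM
    have hmm : (N * Nᵀ).map Complex.ofReal = M * Mᴴ := by
      have h2 : (Nᵀ).map Complex.ofReal = Mᴴ := by
        ext i j
        simp [hM, Matrix.conjTranspose_apply, Matrix.map_apply, Complex.conj_ofReal]
      rw [map_mul', h2]
    -- compute M
    have hexp_map : (NormedSpace.exp (τ • A)).map Complex.ofReal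
        = NormedSpace.exp ((τ • A).map Complex.ofReal) := by
      letI : SeminormedRing (Matrix (Fin n) (Fin n) ℝ) := Matrix.linftyOpSemiNormedRing
      letI : NormedRing (Matrix (Fin n) (Fin n) ℝ) := Matrix.linftyOpNormedRing
      letI : NormedAlgebra ℝ (Matrix (Fin n) (Fin n) ℝ) := Matrix.linftyOpNormedAlgebra
      letI : SeminormedRing (Matrix (Fin n) (Fin n) ℂ) := Matrix.linftyOpSemiNormedRing
      letI : NormedRing (Matrix (Fin n) (Fin n) ℂ) := Matrix.linftyOpNormedRing
      letI : NormedAlgebra ℝ (Matrix (Fin n) (Fin n) ℂ) := Matrix.linftyOpNormedAlgebra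
      letI : NormedAlgebra ℚ (Matrix (Fin n) (Fin n) ℝ) := Matrix.linftyOpNormedAlgebra
      letI : NormedAlgebra ℚ (Matrix (Fin n) (Fin n) ℂ) := Matrix.linftyOpNormedAlgebra
      exact NormedSpace.map_exp (Complex.ofRealHom.mapMatrix :
          Matrix (Fin n) (Fin n) ℝ →+* Matrix (Fin n) (Fin n) ℂ)
        (continuous_id.matrix_map Complex.continuous_ofReal) (τ • A)
    have hsmul_map : (τ • A).map Complex.ofReal = Q * Matrix.diagonal (fun k => (τ : ℂ) * lam k) * Q⁻¹ := by
      have h3 : (τ • A).map Complex.ofReal = (τ : ℂ) • A.map Complex.ofReal := by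
        ext i j
        simp [Matrix.map_apply, Matrix.smul_apply, Complex.real_smul]
      rw [h3, hA]
      have : Matrix.diagonal (fun k => (τ : ℂ) * lam k) = (τ : ℂ) • Matrix.diagonal lam := by
        rw [← Matrix.diagonal_smul]; rfl
      rw [this, Matrix.mul_smul, Matrix.smul_mul]
    have hexpC : NormedSpace.exp ((τ • A).map Complex.ofReal)
        = Q * Matrix.diagonal (fun k => Complex.exp (τ * lam k)) * Q⁻¹ := by
      rw [hsmul_map, Matrix.exp_conj Q _ hQu, Matrix.exp_diagonal]
      have he : NormedSpace.exp (fun k => (τ : ℂ) * lam k)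
          = fun k => Complex.exp ((τ : ℂ) * lam k) := by
        rw [Pi.exp_def]
        funext k
        rw [← Complex.exp_eq_exp_ℂ]
      rw [he]
    have hMval : M = Q * Matrix.diagonal (fun k => Complex.exp (τ * lam k)) *
        (Q⁻¹ * B.map Complex.ofReal) := by
      rw [hM, hN, map_mul', hexp_map, hexpC]
      simp only [Matrix.mul_assoc]
    -- assemble
    rw [hre, hmm, hMval, hΨ]
    set C : Matrix (Fin n) (Fin m) ℂ := Q⁻¹ * B.map Complex.ofReal with hC
    have : (Q * Matrix.diagonal (fun k => Complex.exp (τ * lam k)) * C)ᴴ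
        = Cᴴ * Matrix.diagonal (fun k => Complex.exp (τ * starRingEnd ℂ (lam k))) * Qᴴ := by
      simp only [Matrix.conjTranspose_mul, Matrix.diagonal_conjTranspose]
      have : star (fun k => Complex.exp (τ * lam k))
          = fun k => Complex.exp (τ * starRingEnd ℂ (lam k)) := by
        funext k
        simp only [Pi.star_apply, Complex.star_def, ← Complex.exp_conj, _root_.map_mul,
          Complex.conj_ofReal]
      rw [this, Matrix.mul_assoc]
    rw [this]
    have hmid : Matrix.diagonal (fun k => Complex.exp (τ * lam k)) * (C * Cᴴ) *
        Matrix.diagonal (fun k => Complex.exp (τ * starRingEnd ℂ (lam k)))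
        = Matrix.of fun k l : Fin n =>
            ((C * Cᴴ) k l) * Complex.exp ((lam k + starRingEnd ℂ (lam l)) * τ) := by
      ext k l
      simp only [Matrix.diagonal_mul, Matrix.mul_diagonal, Matrix.of_apply]
      rw [add_mul, Complex.exp_add]
      ring
    calc Q * Matrix.diagonal (fun k => Complex.exp (τ * lam k)) * C *
          (Cᴴ * Matrix.diagonal (fun k => Complex.exp (τ * starRingEnd ℂ (lam k))) * Qᴴ)
        = Q * (Matrix.diagonal (fun k => Complex.exp (τ * lam k)) * (C * Cᴴ) *
            Matrix.diagonal (fun k => Complex.exp (τ * starRingEnd ℂ (lam k)))) * Qᴴ := by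
          simp only [Matrix.mul_assoc]
      _ = _ := by rw [hmid]
  -- now the integral
  ext k l
  simp only [Matrix.map_apply, Matrix.of_apply]
  rw [← intervalIntegral.integral_ofReal]
  have hent : ∀ τ : ℝ,
      (((NormedSpace.exp (τ • A) * (B * Bᵀ) * NormedSpace.exp (τ • Aᵀ)) k l : ℝ) : ℂ)
        = ∑ j : Fin n, ∑ i : Fin n,
            (Q k i * Ψ i j * Qᴴ j l) * Complex.exp ((lam i + starRingEnd ℂ (lam j)) * τ) := by
    intro τ
    have h := key τ
    have h2 := congrFun (congrFun h k) l
    simp only [Matrix.map_apply] at h2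
    rw [h2]
    simp only [Matrix.mul_apply, Matrix.of_apply, Finset.sum_mul, Finset.mul_sum]
    refine Finset.sum_congr rfl fun j _ => Finset.sum_congr rfl fun i _ => ?_
    rw [add_mul]
    ring
  calc (∫ τ in (0:ℝ)..t,
        (((NormedSpace.exp (τ • A) * (B * Bᵀ) * NormedSpace.exp (τ • Aᵀ)) k l : ℝ) : ℂ))
      = ∫ τ in (0:ℝ)..t, ∑ j : Fin n, ∑ i : Fin n,
          (Q k i * Ψ i j * Qᴴ j l) * Complex.exp ((lam i + starRingEnd ℂ (lam j)) * τ) := by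
        apply intervalIntegral.integral_congr
        intro τ _
        exact hent τ
    _ = ∑ j : Fin n, ∑ i : Fin n, ∫ τ in (0:ℝ)..t,
          (Q k i * Ψ i j * Qᴴ j l) * Complex.exp ((lam i + starRingEnd ℂ (lam j)) * τ) := by
        rw [intervalIntegral.integral_finset_sum]
        · apply Finset.sum_congr rfl
          intro j _
          rw [intervalIntegral.integral_finset_sum]
          intro i _
          apply Continuous.intervalIntegrable
          exact continuous_const.mul (Complex.continuous_exp.comp
            (continuous_const.mul Complex.continuous_ofReal))
        · intro j _
          apply Continuous.intervalIntegrable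
          apply continuous_finset_sum
          intro i _
          exact continuous_const.mul (Complex.continuous_exp.comp
            (continuous_const.mul Complex.continuous_ofReal))
    _ = ∑ j : Fin n, ∑ i : Fin n,
          (Q k i * Ψ i j * Qᴴ j l) *
            ((Complex.exp ((lam i + starRingEnd ℂ (lam j)) * t) - 1) /
              (lam i + starRingEnd ℂ (lam j))) := by
        apply Finset.sum_congr rfl; intro j _
        apply Finset.sum_congr rfl; intro i _
        rw [intervalIntegral.integral_const_mul, integral_exp_mul_complex (hlam i j)]
        norm_num
    _ = (Q * (Matrix.of fun k l : Fin n =>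
            Ψ k l / (lam k + starRingEnd ℂ (lam l)) *
              (Complex.exp ((lam k + starRingEnd ℂ (lam l)) * t) - 1)) * Qᴴ) k l := by
        simp only [Matrix.mul_apply, Matrix.of_apply, Finset.sum_mul, Finset.mul_sum]
        refine Finset.sum_congr rfl fun j _ => Finset.sum_congr rfl fun i _ => ?_
        rw [div_eq_mul_inv, div_eq_mul_inv]
        ring
end

section
/- Let A be a real n×n matrix that is diagonalizable over ℂ as A = Q Λ Q⁻¹ with Q an invertible complex n×n matrix and Λ = diag(λ₁,…,λₙ), let B be a real n×m matrix, set Ψ := Q⁻¹B (Q⁻¹B)ᴴ, and assume λ_k + conj(λ_ℓ) ≠ 0 for all 1 ≤ k, ℓ ≤ n. Then for every t ≥ 0, ∫₀ᵗ e^{−Aτ} B Bᵀ e^{−Aᵀτ} dτ = Q Θb(t) Qᴴ, where Θb(t) is the complex n×n matrix with entries Θb(t)_{k,ℓ} = ψ_{k,ℓ} / (λ_k + conj(λ_ℓ)) · (1 − e^{−(λ_k + conj(λ_ℓ)) t}) and ψ_{k,ℓ} denotes the (k,ℓ) entry of Ψ. -/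
open Matrix MeasureTheory

section Aux

attribute [local instance] Matrix.linftyOpSemiNormedRing Matrix.linftyOpNormedRing
  Matrix.linftyOpNormedAlgebra

lemma aux_matrix_map_exp {n : ℕ} (M : Matrix (Fin n) (Fin n) ℝ) :
    (NormedSpace.exp M).map Complex.ofReal
      = NormedSpace.exp (M.map Complex.ofReal) := by
  have hc : Continuous (fun X : Matrix (Fin n) (Fin n) ℝ =>
      (Complex.ofRealHom.mapMatrix (m := Fin n)) X) := by
    change Continuous fun X : Matrix (Fin n) (Fin n) ℝ => X.map Complex.ofReal
    exact continuous_pi fun i => continuous_pi fun j =>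
      Complex.continuous_ofReal.comp ((continuous_apply j).comp (continuous_apply i))
  have := NormedSpace.map_exp (Complex.ofRealHom.mapMatrix (m := Fin n)) hc M
  simp only [RingHom.mapMatrix_apply] at this
  rw [show (Complex.ofRealHom : ℝ → ℂ) = Complex.ofReal from rfl] at this
  exact this

end Aux

/-- map of a real matrix's transpose is the conjugate transpose of its map. -/
lemma aux_map_transpose {p q : ℕ} (X : Matrix (Fin p) (Fin q) ℝ) :
    (Xᵀ).map Complex.ofReal = ((X.map Complex.ofReal))ᴴ := by
  ext i j
  simp [Matrix.conjTranspose_apply, Matrix.map_apply, Complex.conj_ofReal]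

set_option maxHeartbeats 1000000 in
/-- closed form of the backward Gramian integral with a matrix input
`∫₀ᵗ e^{−Aτ} B Bᵀ e^{−Aᵀτ} dτ = Q Θb(t) Qᴴ` where
`Θb(t)ₖₗ = ψₖₗ/(λₖ+conj λₗ)·(1−e^{−(λₖ+conj λₗ)t})` and `Ψ = Q⁻¹B (Q⁻¹B)ᴴ`. -/
theorem backward_gramian_closed_form_matrix_input
    {n m : ℕ} (A : Matrix (Fin n) (Fin n) ℝ) (Q : Matrix (Fin n) (Fin n) ℂ)
    (lam : Fin n → ℂ) (B : Matrix (Fin n) (Fin m) ℝ)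
    (hQ : IsUnit Q.det)
    (hA : A.map (Complex.ofReal) = Q * Matrix.diagonal lam * Q⁻¹)
    (hlam : ∀ k l : Fin n, lam k + starRingEnd ℂ (lam l) ≠ 0)
    (Ψ : Matrix (Fin n) (Fin n) ℂ)
    (hΨ : Ψ = (Q⁻¹ * B.map (Complex.ofReal)) * (Q⁻¹ * B.map (Complex.ofReal))ᴴ)
    (t : ℝ) (ht : 0 ≤ t) :
    (Matrix.of fun k l : Fin n =>
        ∫ τ in (0:ℝ)..t,
          (NormedSpace.exp ((-τ) • A) * (B * Bᵀ) *
            NormedSpace.exp ((-τ) • Aᵀ)) k l).map (Complex.ofReal)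
      = Q * (Matrix.of fun k l : Fin n =>
            Ψ k l / (lam k + starRingEnd ℂ (lam l)) *
              (1 - Complex.exp (-((lam k + starRingEnd ℂ (lam l)) * t)))) * Qᴴ := by
  set s : Fin n → Fin n → ℂ := fun i j => lam i + starRingEnd ℂ (lam j) with hs
  have hQu : IsUnit Q := (Matrix.isUnit_iff_isUnit_det Q).mpr hQ
  -- the complexified exponential
  have hexp : ∀ τ : ℝ, (NormedSpace.exp ((-τ) • A)).map Complex.ofReal
      = Q * Matrix.diagonal (fun i => Complex.exp ((-τ : ℂ) * lam i)) * Q⁻¹ := by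
    intro τ
    rw [aux_matrix_map_exp]
    have hmap : ((-τ) • A).map Complex.ofReal
        = Q * Matrix.diagonal (fun i => (-τ : ℂ) * lam i) * Q⁻¹ := by
      have h1 : ((-τ) • A).map Complex.ofReal = (-τ : ℂ) • (A.map Complex.ofReal) := by
        ext i j; simp [Matrix.map_apply]
      have h2 : Q * Matrix.diagonal (fun i => (-τ : ℂ) * lam i) * Q⁻¹
          = (-τ : ℂ) • (Q * Matrix.diagonal lam * Q⁻¹) := by
        have hd : Matrix.diagonal (fun i => (-τ : ℂ) * lam i)
            = (-τ : ℂ) • Matrix.diagonal lam := by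
          rw [← Matrix.diagonal_smul]
          rfl
        rw [hd, mul_smul_comm, smul_mul_assoc]
      rw [h1, hA, h2]
    rw [hmap, Matrix.exp_conj Q _ hQu, Matrix.exp_diagonal]
    rw [show (NormedSpace.exp fun i => (-τ : ℂ) * lam i)
        = fun i => Complex.exp ((-τ : ℂ) * lam i) from by
      rw [Pi.exp_def]; funext i; rw [← Complex.exp_eq_exp_ℂ]]
  have hexpT : ∀ τ : ℝ, (NormedSpace.exp ((-τ) • Aᵀ)).map Complex.ofReal
      = (Q⁻¹)ᴴ * Matrix.diagonal (fun j => Complex.exp ((-τ : ℂ) * starRingEnd ℂ (lam j))) * Qᴴ := by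
    intro τ
    have h1 : (-τ) • Aᵀ = ((-τ) • A)ᵀ := by rw [Matrix.transpose_smul]
    rw [h1, Matrix.exp_transpose, aux_map_transpose, hexp τ]
    rw [Matrix.conjTranspose_mul, Matrix.conjTranspose_mul, Matrix.diagonal_conjTranspose]
    have hstar : (star fun i => Complex.exp ((-τ : ℂ) * lam i))
        = fun j => Complex.exp ((-τ : ℂ) * starRingEnd ℂ (lam j)) := by
      funext j
      rw [Pi.star_apply, RCLike.star_def, ← Complex.exp_conj, _root_.map_mul, map_neg,
        Complex.conj_ofReal]
    rw [hstar, Matrix.mul_assoc]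
  -- pointwise identity for the integrand, complexified
  have hpt : ∀ τ : ℝ, ((NormedSpace.exp ((-τ) • A) * (B * Bᵀ) *
        NormedSpace.exp ((-τ) • Aᵀ)).map Complex.ofReal)
      = Q * (Matrix.of fun i j =>
            Complex.exp ((-τ : ℂ) * lam i) * Ψ i j *
              Complex.exp ((-τ : ℂ) * starRingEnd ℂ (lam j))) * Qᴴ := by
    intro τ
    have hcast : ∀ {p q r : ℕ} (X : Matrix (Fin p) (Fin q) ℝ) (Y : Matrix (Fin q) (Fin r) ℝ),
        (X * Y).map Complex.ofReal = X.map Complex.ofReal * Y.map Complex.ofReal := by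
      intro p q r X Y
      exact Matrix.map_mul (L := X) (M := Y) (f := Complex.ofRealHom)
    rw [hcast, hcast, hcast, hexp, hexpT, aux_map_transpose]
    have hE : (Matrix.of fun i j =>
          Complex.exp ((-τ : ℂ) * lam i) * Ψ i j *
            Complex.exp ((-τ : ℂ) * starRingEnd ℂ (lam j)))
        = Matrix.diagonal (fun i => Complex.exp ((-τ : ℂ) * lam i)) * Ψ *
            Matrix.diagonal (fun j => Complex.exp ((-τ : ℂ) * starRingEnd ℂ (lam j))) := by
      ext i j
      rw [Matrix.mul_diagonal, Matrix.diagonal_mul]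
      simp
    rw [hE, hΨ, Matrix.conjTranspose_mul]
    simp only [Matrix.mul_assoc]
  -- now work entrywise
  ext k l
  simp only [Matrix.map_apply, Matrix.of_apply]
  rw [← intervalIntegral.integral_ofReal]
  -- rewrite the integrand
  have hint : ∀ τ : ℝ,
      ((NormedSpace.exp ((-τ) • A) * (B * Bᵀ) *
        NormedSpace.exp ((-τ) • Aᵀ)) k l : ℂ)
      = ∑ j : Fin n, ∑ i : Fin n,
          (Q k i * Ψ i j * (starRingEnd ℂ) (Q l j)) * Complex.exp (-(s i j) * τ) := by
    intro τ
    have h0 : ((NormedSpace.exp ((-τ) • A) * (B * Bᵀ) *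
        NormedSpace.exp ((-τ) • Aᵀ)) k l : ℂ)
        = ((NormedSpace.exp ((-τ) • A) * (B * Bᵀ) *
        NormedSpace.exp ((-τ) • Aᵀ)).map Complex.ofReal) k l := rfl
    rw [h0, hpt τ]
    rw [Matrix.mul_apply]
    refine Finset.sum_congr rfl fun j _ => ?_
    rw [Matrix.mul_apply, Finset.sum_mul]
    refine Finset.sum_congr rfl fun i _ => ?_
    simp only [Matrix.of_apply, Matrix.conjTranspose_apply, RCLike.star_def]
    have he : Complex.exp ((-τ : ℂ) * lam i) * Complex.exp ((-τ : ℂ) * starRingEnd ℂ (lam j))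
        = Complex.exp (-(s i j) * τ) := by
      rw [← Complex.exp_add]; congr 1; simp only [hs]; ring
    linear_combination (Q k i * Ψ i j * (starRingEnd ℂ) (Q l j)) * he
  rw [intervalIntegral.integral_congr (g := fun τ => ∑ j : Fin n, ∑ i : Fin n,
      (Q k i * Ψ i j * (starRingEnd ℂ) (Q l j)) * Complex.exp (-(s i j) * τ))
      (fun τ _ => hint τ)]
  have hc : ∀ i j : Fin n, Continuous (fun τ : ℝ =>
      (Q k i * Ψ i j * (starRingEnd ℂ) (Q l j)) * Complex.exp (-(s i j) * τ)) :=
    fun i j => continuous_const.mul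
      (Complex.continuous_exp.comp (continuous_const.mul Complex.continuous_ofReal))
  rw [intervalIntegral.integral_finset_sum
    (fun j _ => ((continuous_finset_sum Finset.univ
      (fun i _ => hc i j)).intervalIntegrable 0 t))]
  -- compute RHS entry
  rw [Matrix.mul_apply]
  refine Finset.sum_congr rfl fun j _ => ?_
  rw [intervalIntegral.integral_finset_sum (fun i _ => (hc i j).intervalIntegrable 0 t)]
  rw [Matrix.mul_apply, Finset.sum_mul]
  refine Finset.sum_congr rfl fun i _ => ?_
  rw [intervalIntegral.integral_const_mul, integral_exp_mul_complex
    (neg_ne_zero.mpr (hlam i j))]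
  simp only [Matrix.of_apply, Matrix.conjTranspose_apply, RCLike.star_def]
  rw [Complex.ofReal_zero, mul_zero, Complex.exp_zero,
    show (-(s i j) * (t : ℂ)) = -(s i j * t) by ring]
  rw [div_neg, ← neg_div, neg_sub]
  ring
end

section
/- Let A be a real n×n matrix that is diagonalizable over ℂ as A = Q Λ Q⁻¹ with Q an invertible complex n×n matrix and Λ = diag(λ₁,…,λₙ), let b ∈ ℝⁿ, and assume Re(λ_k) < 0 for all k (stability). Then the limit lim_{t→∞} ∫₀ᵗ e^{Aτ} b bᵀ e^{Aᵀτ} dτ exists and equals Q Θ∞ Qᴴ, where Θ∞ is the complex n×n matrix with entries (Θ∞)_{k,ℓ} = − (Q⁻¹b)_k · conj((Q⁻¹b)_ℓ) / (λ_k + conj(λ_ℓ)). -/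
open Matrix MeasureTheory Filter NormedSpace

attribute [local instance] Matrix.linftyOpNormedRing Matrix.linftyOpNormedAlgebra

lemma gls_exp_map {n : ℕ} (A : Matrix (Fin n) (Fin n) ℝ) (Q : Matrix (Fin n) (Fin n) ℂ)
    (lam : Fin n → ℂ) (hQ : IsUnit Q.det)
    (hA : A.map (Complex.ofReal) = Q * Matrix.diagonal lam * Q⁻¹) (τ : ℝ) :
    (NormedSpace.exp (τ • A)).map Complex.ofReal
      = Q * Matrix.diagonal (fun p => Complex.exp (lam p * τ)) * Q⁻¹ := by
  have hQu : IsUnit Q := (Matrix.isUnit_iff_isUnit_det Q).mpr hQ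
  have h1 : (NormedSpace.exp (τ • A)).map Complex.ofReal
      = NormedSpace.exp ((τ • A).map Complex.ofReal) := by
    have := map_exp (Complex.ofRealHom.mapMatrix :
        Matrix (Fin n) (Fin n) ℝ →+* Matrix (Fin n) (Fin n) ℂ)
      (Continuous.matrix_map continuous_id Complex.continuous_ofReal) (τ • A)
    simp only [RingHom.mapMatrix_apply] at this; exact this
  have h2 : (τ • A).map Complex.ofReal = Q * (τ • Matrix.diagonal lam) * Q⁻¹ := by
    have : (τ • A).map Complex.ofReal = τ • (A.map Complex.ofReal) := by
      ext i j; simp [Complex.ofReal_mul]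
    rw [this, hA]
    rw [Matrix.mul_smul, Matrix.smul_mul]
  rw [h1, h2, Matrix.exp_conj Q _ hQu]
  congr 1
  congr 1
  have : τ • Matrix.diagonal lam = Matrix.diagonal (fun p => τ • lam p) := by
    ext i j
    by_cases h : i = j <;> simp [Matrix.diagonal, h]
  rw [this, Matrix.exp_diagonal]
  have he : NormedSpace.exp (fun p : Fin n => τ • lam p)
      = fun p => Complex.exp (lam p * τ) := by
    funext p
    rw [Pi.coe_exp (fun q : Fin n => τ • lam q) p,
      ← Complex.exp_eq_exp_ℂ, Complex.real_smul, mul_comm]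
  rw [he]

lemma gls_cexp_tendsto {μ : ℂ} (h : μ.re < 0) :
    Tendsto (fun t : ℝ => Complex.exp (μ * t)) atTop (nhds 0) := by
  rw [tendsto_zero_iff_norm_tendsto_zero]
  have h1 : ∀ t : ℝ, ‖Complex.exp (μ * t)‖ = Real.exp (μ.re * t) := by
    intro t
    rw [Complex.norm_exp]
    congr 1
    simp [Complex.mul_re]
  simp_rw [h1]
  exact Real.tendsto_exp_atBot.comp ((tendsto_const_mul_atBot_of_neg h).mpr tendsto_id)

/-- for a stable diagonalizable `A = Q Λ Q⁻¹` (all eigenvalues with negative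
real part), the Gramian `∫₀ᵗ e^{Aτ} b bᵀ e^{Aᵀτ} dτ` converges entrywise, as `t → ∞`, to
`Q Θ∞ Qᴴ` with `(Θ∞)ₖₗ = −(Q⁻¹b)ₖ conj((Q⁻¹b)ₗ)/(λₖ + conj λₗ)`. -/
theorem gramian_limit_stable
    {n : ℕ} (A : Matrix (Fin n) (Fin n) ℝ) (Q : Matrix (Fin n) (Fin n) ℂ)
    (lam : Fin n → ℂ) (b : Fin n → ℝ)
    (hQ : IsUnit Q.det)
    (hA : A.map (Complex.ofReal) = Q * Matrix.diagonal lam * Q⁻¹)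
    (hstab : ∀ k : Fin n, (lam k).re < 0) :
    ∀ k l : Fin n,
      Tendsto (fun t : ℝ =>
          ((∫ τ in (0:ℝ)..t,
            (NormedSpace.exp (τ • A) * Matrix.vecMulVec b b *
              NormedSpace.exp (τ • Aᵀ)) k l : ℝ) : ℂ))
        atTop
        (nhds ((Q * (Matrix.of fun k l : Fin n =>
            -((Q⁻¹ *ᵥ fun i => ((b i : ℂ))) k *
                starRingEnd ℂ ((Q⁻¹ *ᵥ fun i => ((b i : ℂ))) l) /
                  (lam k + starRingEnd ℂ (lam l)))) * Qᴴ) k l)) := by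
  intro k l
  set bC : Fin n → ℂ := fun i => ((b i : ℂ)) with hbC
  set c : Fin n → ℂ := Q⁻¹ *ᵥ bC with hc
  set μ : Fin n → Fin n → ℂ := fun p q => lam p + starRingEnd ℂ (lam q) with hμ
  set a : Fin n → Fin n → ℂ :=
    fun p q => Q k p * c p * (starRingEnd ℂ (Q l q) * starRingEnd ℂ (c q)) with ha
  have hμre : ∀ p q, (μ p q).re < 0 := by
    intro p q
    simp only [hμ, Complex.add_re, Complex.conj_re]
    linarith [hstab p, hstab q]
  have hμ0 : ∀ p q, μ p q ≠ 0 := by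
    intro p q h
    have := hμre p q
    rw [h] at this; simp at this
  -- pointwise formula for the integrand
  have hpt : ∀ τ : ℝ,
      (((NormedSpace.exp (τ • A) * Matrix.vecMulVec b b *
          NormedSpace.exp (τ • Aᵀ)) k l : ℝ) : ℂ)
        = ∑ p, ∑ q, a p q * Complex.exp (μ p q * τ) := by
    intro τ
    set E : Matrix (Fin n) (Fin n) ℝ := NormedSpace.exp (τ • A) with hE
    have hET : NormedSpace.exp (τ • Aᵀ) = Eᵀ := by
      rw [hE, ← Matrix.transpose_smul, Matrix.exp_transpose]
    have hentry : (E * Matrix.vecMulVec b b * Eᵀ) k l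
        = (∑ i, E k i * b i) * (∑ j, E l j * b j) := by
      simp only [Matrix.mul_apply, Matrix.vecMulVec_apply, Matrix.transpose_apply]
      rw [Finset.sum_mul_sum]
      rw [Finset.sum_comm]
      simp only [Finset.sum_mul, Finset.mul_sum]
      apply Finset.sum_congr rfl; intro j _
      apply Finset.sum_congr rfl; intro i _
      ring
    have hmapE := gls_exp_map A Q lam hQ hA τ
    have hv : ∀ m : Fin n, ((∑ i, E m i * b i : ℝ) : ℂ)
        = ∑ p, Q m p * (Complex.exp (lam p * τ) * c p) := by
      intro m
      calc ((∑ i, E m i * b i : ℝ) : ℂ)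
          = ((E.map Complex.ofReal) *ᵥ bC) m := by
            simp [Matrix.mulVec, dotProduct, Matrix.map_apply, hbC]
        _ = ((Q * Matrix.diagonal (fun p => Complex.exp (lam p * τ)) * Q⁻¹) *ᵥ bC) m := by
            rw [hmapE]
        _ = (Q *ᵥ ((Matrix.diagonal (fun p => Complex.exp (lam p * τ))) *ᵥ (Q⁻¹ *ᵥ bC))) m := by
            rw [Matrix.mulVec_mulVec, Matrix.mulVec_mulVec]
        _ = ∑ p, Q m p * ((Matrix.diagonal (fun p => Complex.exp (lam p * τ)) *ᵥ c) p) := by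
            rw [← hc]; simp [Matrix.mulVec, dotProduct]
        _ = ∑ p, Q m p * (Complex.exp (lam p * τ) * c p) := by
            simp [Matrix.mulVec_diagonal]
    rw [hET, hentry]
    rw [Complex.ofReal_mul]
    rw [show ((∑ j, E l j * b j : ℝ) : ℂ)
        = starRingEnd ℂ ((∑ j, E l j * b j : ℝ) : ℂ) from (Complex.conj_ofReal _).symm]
    rw [hv k, hv l, map_sum, Finset.sum_mul_sum]
    apply Finset.sum_congr rfl; intro p _
    apply Finset.sum_congr rfl; intro q _
    simp only [ha, hμ, _root_.map_mul]
    rw [← Complex.exp_conj, _root_.map_mul, Complex.conj_ofReal, add_mul, Complex.exp_add]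
    ring
  -- continuity / integrability of summands
  have hcont : ∀ p q : Fin n,
      Continuous (fun τ : ℝ => a p q * Complex.exp (μ p q * τ)) := fun p q =>
    continuous_const.mul
      (Complex.continuous_exp.comp (continuous_const.mul Complex.continuous_ofReal))
  -- compute the integral
  have hint : ∀ t : ℝ,
      ((∫ τ in (0:ℝ)..t,
          (NormedSpace.exp (τ • A) * Matrix.vecMulVec b b *
            NormedSpace.exp (τ • Aᵀ)) k l : ℝ) : ℂ)
        = ∑ p, ∑ q, a p q * ((Complex.exp (μ p q * t) - 1) / μ p q) := by
    intro t
    have h0 : ((∫ τ in (0:ℝ)..t,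
          (NormedSpace.exp (τ • A) * Matrix.vecMulVec b b *
            NormedSpace.exp (τ • Aᵀ)) k l : ℝ) : ℂ)
        = ∫ τ in (0:ℝ)..t,
            (((NormedSpace.exp (τ • A) * Matrix.vecMulVec b b *
              NormedSpace.exp (τ • Aᵀ)) k l : ℝ) : ℂ) :=
      RCLike.intervalIntegral_ofReal.symm
    rw [h0]
    rw [intervalIntegral.integral_congr
      (g := fun τ => ∑ p, ∑ q, a p q * Complex.exp (μ p q * τ)) (fun τ _ => hpt τ)]
    rw [intervalIntegral.integral_finset_sum (fun p _ =>
      Continuous.intervalIntegrable (continuous_finset_sum _ fun q _ => hcont p q) _ _)]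
    apply Finset.sum_congr rfl; intro p _
    rw [intervalIntegral.integral_finset_sum (fun q _ =>
      (hcont p q).intervalIntegrable _ _)]
    apply Finset.sum_congr rfl; intro q _
    rw [intervalIntegral.integral_const_mul, integral_exp_mul_complex (hμ0 p q)]
    norm_num
  -- the limit
  have hlim : Tendsto (fun t : ℝ => ∑ p, ∑ q, a p q * ((Complex.exp (μ p q * t) - 1) / μ p q))
      atTop (nhds (∑ p, ∑ q, a p q * ((0 - 1) / μ p q))) := by
    apply tendsto_finset_sum; intro p _
    apply tendsto_finset_sum; intro q _
    exact Tendsto.const_mul _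
      (((gls_cexp_tendsto (hμre p q)).sub_const 1).div_const _)
  have hval : ((Q * (Matrix.of fun k l : Fin n =>
      -(c k * starRingEnd ℂ (c l) / (lam k + starRingEnd ℂ (lam l)))) * Qᴴ) k l)
      = ∑ p, ∑ q, a p q * ((0 - 1) / μ p q) := by
    simp only [Matrix.mul_apply, Matrix.conjTranspose_apply, Matrix.of_apply, Finset.sum_mul]
    rw [Finset.sum_comm]
    apply Finset.sum_congr rfl; intro p _
    apply Finset.sum_congr rfl; intro q _
    simp only [ha, hμ, Complex.star_def]
    ring
  rw [← hc, hval] at *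
  exact Tendsto.congr (fun t => (hint t).symm) hlim
end
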